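/- arXiv:1705.10997 — 3 statements merged into one kernel-verified Lean document; each statement's English description precedes it below -/
import Mathlib

section
/- Let f : ℝ → [0,∞) be even, C¹ on (0,∞), with f(0)=0, f increasing on [0,∞), and suppose f′ is decreasing on [γ, ∞) for some γ > 0 and there exists ε₀ ∈ (0,1) with y f′(y) ≤ (1 − ε₀) f(y) for all y ≥ γ. Then for all x ≥ 2γ and all y ∈ [γ, x/2]: f(x) − f(y) − f(x − y) ≤ −ε₀ f(y). Equivalently, J(x−y)J(y)/J(x) ≤ e^{−ε₀ f(y)} where J = e^{−f}. -/
open Real Filter Set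

/-- Sub-additivity-type estimate for fat-tailed kernels: if `f'` is
decreasing on `[γ,∞)` and `y f'(y) ≤ (1−ε₀) f(y)` for `y ≥ γ`, then for `x ≥ 2γ` and
`y ∈ [γ, x/2]`, `f(x) − f(y) − f(x−y) ≤ −ε₀ f(y)`. -/
theorem stmt6 (f : ℝ → ℝ) (heven : ∀ x, f (-x) = f x) (hnn : ∀ x, 0 ≤ f x)
    (hf : ContDiffOn ℝ 1 f (Set.Ioi 0)) (hf0 : f 0 = 0)
    (hmono : MonotoneOn f (Set.Ici 0))
    (γ : ℝ) (hγ : 0 < γ) (hderiv_dec : AntitoneOn (deriv f) (Set.Ici γ))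
    (ε₀ : ℝ) (hε₀ : ε₀ ∈ Set.Ioo (0:ℝ) 1)
    (hsub : ∀ y : ℝ, γ ≤ y → y * deriv f y ≤ (1 - ε₀) * f y) :
    ∀ x : ℝ, 2*γ ≤ x → ∀ y ∈ Set.Icc γ (x/2),
      f x - f y - f (x - y) ≤ -ε₀ * f y := by
  intro x hx y hy
  obtain ⟨hyγ, hyx2⟩ := hy
  have hy0 : 0 < y := lt_of_lt_of_le hγ hyγ
  have hxy : γ ≤ x - y := by linarith
  have hab : x - y < x := by linarith
  have hsubIoi : Set.Icc (x - y) x ⊆ Set.Ioi 0 := fun z hz => lt_of_lt_of_le (lt_of_lt_of_le hγ hxy) hz.1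
  have hcont : ContinuousOn f (Set.Icc (x - y) x) := (hf.continuousOn).mono hsubIoi
  have hdiff : ∀ z ∈ Set.Ioo (x - y) x, DifferentiableAt ℝ f z := by
    intro z hz
    have hz0 : z ∈ Set.Ioi (0:ℝ) := lt_of_lt_of_le hγ (le_of_lt (lt_of_le_of_lt hxy hz.1))
    exact (hf.differentiableOn one_ne_zero).differentiableAt (isOpen_Ioi.mem_nhds hz0)
  obtain ⟨c, hc, hceq⟩ := exists_deriv_eq_slope f hab hcont (fun z hz => (hdiff z hz).differentiableWithinAt)
  have hc1 : f x - f (x - y) = y * deriv f c := by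
    have : x - (x - y) = y := by ring
    rw [hceq, this]
    field_simp
  have hyc : y ≤ c := le_trans (by linarith [hc.1]) (le_of_lt hc.1)
  have hd : deriv f c ≤ deriv f y := hderiv_dec hyγ (le_trans hyγ hyc) hyc
  have h1 : f x - f (x - y) ≤ y * deriv f y := by
    rw [hc1]
    exact mul_le_mul_of_nonneg_left hd (le_of_lt hy0)
  have h2 := hsub y hyγ
  linarith
end

section
/- Let θ : [0,∞) → [0,∞) be bounded and continuous, and let J, φ : [0,∞) × ℝ → ℝ with φ(t,x) = 1/(1 + e^{−t}/J(x)) and J : ℝ → (0,1]. Suppose −θ(t)φ(t,x) ≤ (J*φ − φ)(t,x) ≤ θ(t)φ(t,x) for all t > 0, x ∈ ℝ, where (J*φ)(t,x) = ∫ J(x−y)φ(t,y)dy. Define overφ(t,x) = 2 C̄ φ(t,x) exp(∫₀ᵗ θ(s)ds) for a constant C̄ ≥ 1. Then overφ is a supersolution of ∂ₜ n = J*n − n + n(1−n), i.e. ∂ₜ overφ − (J*overφ − overφ) − overφ(1 − overφ) ≥ 0 for all t > 0, x ∈ ℝ. -/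
open Real Filter Set MeasureTheory

/-- If `φ(t,x) = 1/(1+e^{−t}/J(x))` satisfies the sandwich
`−θφ ≤ J*φ − φ ≤ θφ`, then `Φ(t,x) = 2 C̄ φ(t,x) exp(∫₀ᵗ θ)` with `C̄ ≥ 1` is a
supersolution of `∂ₜ n = J*n − n + n(1−n)`. -/
theorem stmt10 (θ : ℝ → ℝ) (hθc : Continuous θ) (hθbd : ∃ C : ℝ, ∀ t, |θ t| ≤ C)
    (hθnn : ∀ t, 0 ≤ θ t)
    (J : ℝ → ℝ) (hJ : ∀ x, J x ∈ Set.Ioc (0:ℝ) 1) (hJint : Integrable J)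
    (φ : ℝ → ℝ → ℝ) (hφ : ∀ t x, φ t x = 1 / (1 + Real.exp (-t) / J x))
    (hsand : ∀ t : ℝ, 0 < t → ∀ x : ℝ,
      -(θ t * φ t x) ≤ (∫ y, J (x - y) * φ t y) - φ t x ∧
      (∫ y, J (x - y) * φ t y) - φ t x ≤ θ t * φ t x)
    (Cbar : ℝ) (hC : 1 ≤ Cbar)
    (Φ : ℝ → ℝ → ℝ)
    (hΦ : ∀ t x, Φ t x = 2 * Cbar * φ t x * Real.exp (∫ s in (0:ℝ)..t, θ s)) :
    ∀ t : ℝ, 0 < t → ∀ x : ℝ,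
      0 ≤ deriv (fun s => Φ s x) t - ((∫ y, J (x - y) * Φ t y) - Φ t x)
          - Φ t x * (1 - Φ t x) := by
  intro t ht x
  have hJx : 0 < J x := (hJ x).1
  -- denominator positive
  have hden : ∀ s : ℝ, 0 < 1 + Real.exp (-s) / J x := fun s => by positivity
  set e : ℝ := Real.exp (∫ s in (0:ℝ)..t, θ s) with he_def
  have he : 1 ≤ e := by
    apply Real.one_le_exp
    exact intervalIntegral.integral_nonneg ht.le (fun u _ => hθnn u)
  set p : ℝ := φ t x with hp_def
  have hp : 0 < p := by
    rw [hp_def, hφ]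
    exact div_pos one_pos (hden t)
  -- derivative of φ in time
  have hexp : HasDerivAt (fun s : ℝ => Real.exp (-s)) (-Real.exp (-t)) t := by
    simpa using (hasDerivAt_neg t).exp
  have hden' : HasDerivAt (fun s : ℝ => 1 + Real.exp (-s) / J x)
      (-Real.exp (-t) / J x) t := ((hexp.div_const (J x)).const_add 1)
  have hφt : HasDerivAt (fun s => φ s x) (p * (1 - p)) t := by
    have h3 := hden'.inv (ne_of_gt (hden t))
    have heq : (fun s => φ s x) = fun s => (1 + Real.exp (-s) / J x)⁻¹ := by
      funext s; rw [hφ, one_div]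
    rw [heq]
    refine h3.congr_deriv ?_
    rw [hp_def, hφ]
    have hd := hden t
    field_simp
    ring
  -- derivative of the exponential factor
  have hI : HasDerivAt (fun s : ℝ => ∫ u in (0:ℝ)..s, θ u) (θ t) t :=
    intervalIntegral.integral_hasDerivAt_right (hθc.intervalIntegrable 0 t)
      (hθc.stronglyMeasurableAtFilter _ _) hθc.continuousAt
  have hE : HasDerivAt (fun s : ℝ => Real.exp (∫ u in (0:ℝ)..s, θ u)) (e * θ t) t :=
    (Real.hasDerivAt_exp _).comp t hI
  -- derivative of Φ
  have hD : HasDerivAt (fun s => Φ s x)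
      ((2 * Cbar * (p * (1 - p))) * e + (2 * Cbar * p) * (e * θ t)) t := by
    simp only [hΦ]
    exact ((hφt.const_mul (2 * Cbar)).mul hE)
  rw [hD.deriv]
  -- rewrite the convolution
  have hconv : (∫ y, J (x - y) * Φ t y)
      = (2 * Cbar * e) * ∫ y, J (x - y) * φ t y := by
    rw [← MeasureTheory.integral_const_mul]
    congr 1; funext y
    rw [hΦ]; ring
  rw [hconv, hΦ]
  set K : ℝ := ∫ y, J (x - y) * φ t y with hK_def
  have hsandU : K - p ≤ θ t * p := (hsand t ht x).2
  have key : 0 ≤ 2 * Cbar * e * ((p + θ t * p - K) + p ^ 2 * (2 * Cbar * e - 1)) := by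
    have h1 : (0:ℝ) ≤ 2 * Cbar * e := by positivity
    have h2 : 0 ≤ p + θ t * p - K := by linarith
    have h3 : 0 ≤ 2 * Cbar * e - 1 := by nlinarith
    have h4 : 0 ≤ p ^ 2 * (2 * Cbar * e - 1) := mul_nonneg (sq_nonneg p) h3
    exact mul_nonneg h1 (by linarith)
  have hring : 2 * Cbar * (p * (1 - p)) * e + 2 * Cbar * p * (e * θ t)
      - (2 * Cbar * e * K - 2 * Cbar * p * e)
      - 2 * Cbar * p * e * (1 - 2 * Cbar * p * e)
      = 2 * Cbar * e * ((p + θ t * p - K) + p ^ 2 * (2 * Cbar * e - 1)) := by ring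
  linarith [hring ▸ key]
end

section
/- Let J : ℝ → (0,∞) be even with ∫_ℝ J = 1, let f = −ln J, and let A ∈ (0,1) be such that r := ∫_ℝ e^{A f(|h|)} J(h) dh < ∞. Suppose u⁰ : ℝ → ℝ satisfies u⁰(x+h) − u⁰(x) ≥ −A f(|h|) for all x, h. Define s(t,x) = u⁰(x) − r t and let ψ_ε⁻¹(h) = sign(h) f⁻¹(ε f(|h|)). Then for every ε > 0, t ≥ 0, x ∈ ℝ: ∫_ℝ exp(−(1/ε)(s(t, x − ψ_ε⁻¹(h)) − s(t,x))) J(h) dh ≤ r, and hence ∂ₜ s + ∫_ℝ exp(−(1/ε)(s(t, x − ψ_ε⁻¹(h)) − s(t,x))) J(h) dh ≤ 0. -/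
open Real Filter Set MeasureTheory

/-- `s(t,x) = u⁰(x) − rt` with `r = ∫ e^{A f(|h|)} J(h) dh` is a subsolution:
the integral term is bounded by `r` and `∂ₜ s + ∫ exp(−(s(t,x−ψ_ε⁻¹(h))−s(t,x))/ε) J ≤ 0`. -/
theorem stmt15 (J f finv : ℝ → ℝ) (hJpos : ∀ h, 0 < J h) (hJle1 : ∀ h, J h ≤ 1)
    (heven : ∀ h, J (-h) = J h) (hJ1 : ∫ h, J h = 1)
    (hf : ∀ h, f h = -Real.log (J h))
    (A r : ℝ) (hA : A ∈ Set.Ioo (0:ℝ) 1)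
    (hr : r = ∫ h, Real.exp (A * f |h|) * J h)
    (hint : Integrable (fun h => Real.exp (A * f |h|) * J h))
    (u0 : ℝ → ℝ) (hu0 : ∀ x h : ℝ, -(A * f |h|) ≤ u0 (x + h) - u0 x)
    (hleft : ∀ s : ℝ, 0 ≤ s → finv (f s) = s)
    (hright : ∀ y : ℝ, 0 ≤ y → f (finv y) = y)
    (hinvnn : ∀ y : ℝ, 0 ≤ y → 0 ≤ finv y)
    (ψinv : ℝ → ℝ → ℝ)
    (hψ : ∀ ε h : ℝ, ψinv ε h = Real.sign h * finv (ε * f |h|)) :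
    ∀ ε : ℝ, 0 < ε → ∀ t : ℝ, 0 ≤ t → ∀ x : ℝ,
      (∫ h, Real.exp (-(1/ε) *
          ((u0 (x - ψinv ε h) - r*t) - (u0 x - r*t))) * J h) ≤ r ∧
      deriv (fun s => u0 x - r*s) t +
        (∫ h, Real.exp (-(1/ε) *
          ((u0 (x - ψinv ε h) - r*t) - (u0 x - r*t))) * J h) ≤ 0 := by
  intro ε hε t ht x
  have hfnn : ∀ h : ℝ, 0 ≤ f h := by
    intro h
    have := Real.log_nonpos (hJpos h).le (hJle1 h)
    rw [hf]; linarith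
  have hA0 := hA.1
  have key : ∀ h : ℝ, Real.exp (-(1/ε) * ((u0 (x - ψinv ε h) - r*t) - (u0 x - r*t))) * J h
      ≤ Real.exp (A * f |h|) * J h := by
    intro h
    refine mul_le_mul_of_nonneg_right (Real.exp_le_exp.2 ?_) (hJpos h).le
    have hsimp : (u0 (x - ψinv ε h) - r*t) - (u0 x - r*t) = u0 (x - ψinv ε h) - u0 x := by ring
    rw [hsimp]
    have hεf : 0 ≤ ε * f |h| := mul_nonneg hε.le (hfnn _)
    rcases eq_or_ne h 0 with rfl | hne
    · have hz : ψinv ε 0 = 0 := by rw [hψ]; simp [Real.sign_zero]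
      rw [hz]
      simp only [sub_zero, sub_self, mul_zero, neg_zero]
      exact mul_nonneg hA0.le (hfnn _)
    · have hfψ : f |ψinv ε h| = ε * f |h| := by
        have hs : |Real.sign h| = 1 := by
          rcases lt_or_gt_of_ne hne with h1 | h1
          · rw [Real.sign_of_neg h1]; norm_num
          · rw [Real.sign_of_pos h1]; norm_num
        rw [hψ, abs_mul, hs, one_mul, abs_of_nonneg (hinvnn _ hεf), hright _ hεf]
      have h1 := hu0 x (-(ψinv ε h))
      rw [abs_neg, hfψ] at h1
      have h2 : x + -(ψinv ε h) = x - ψinv ε h := by ring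
      rw [h2] at h1
      have h3 : -(1/ε) * (u0 (x - ψinv ε h) - u0 x) ≤ (1/ε) * (A * (ε * f |h|)) := by
        have := neg_le_neg h1
        calc -(1/ε) * (u0 (x - ψinv ε h) - u0 x)
            = (1/ε) * (-(u0 (x - ψinv ε h) - u0 x)) := by ring
          _ ≤ (1/ε) * (A * (ε * f |h|)) := by
              apply mul_le_mul_of_nonneg_left _ (by positivity)
              linarith
      calc -(1/ε) * (u0 (x - ψinv ε h) - u0 x) ≤ (1/ε) * (A * (ε * f |h|)) := h3
        _ = A * f |h| := by field_simp
  have hI : (∫ h, Real.exp (-(1/ε) *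
      ((u0 (x - ψinv ε h) - r*t) - (u0 x - r*t))) * J h) ≤ r := by
    have hmono := integral_mono_of_nonneg
      (Eventually.of_forall fun h => mul_nonneg (Real.exp_nonneg _) (hJpos h).le) hint
      (Eventually.of_forall key)
    linarith
  refine ⟨hI, ?_⟩
  have hd : deriv (fun s => u0 x - r*s) t = -r := by
    simpa using (((hasDerivAt_id t).const_mul r).const_sub (u0 x)).deriv
  rw [hd]
  linarith
end
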